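/- Let F be a rooted forest and let X be a set of nodes of F. Then the set MF(X) of maximal X-factors forms a partition of X, where a factor of F is either a tree factor (the full set of descendants of some node), a forest factor (a nonempty union of tree factors rooted at siblings), or a context factor (a tree factor minus a forest factor whose roots are strict descendants of the tree factor's root), an X-factor is a factor contained in X, and an X-factor is maximal if no other X-factor strictly contains it. -/

import Mathlib

/-- A hypergraph on vertex type `V`: a set of nonempty hyperedges. -/
structure HGraph (V : Type*) where
  E : Set (Set V)
  edge_nonempty : ∀ e ∈ E, e.Nonempty

/-- Two vertices are adjacent if they are distinct and share a hyperedge. -/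
def HGraph.adj {V : Type*} (H : HGraph V) (u v : V) : Prop :=
  u ≠ v ∧ ∃ e ∈ H.E, u ∈ e ∧ v ∈ e

/-- A rooted forest on `V`, given by parent pointers, with no infinite ancestor chains. -/
structure RootedForest (V : Type*) where
  parent : V → Option V
  wf : WellFounded fun a b => parent b = some a

/-- `F.anc a b` : `a` is an ancestor of `b` (every vertex is an ancestor of itself). -/
def RootedForest.anc {V : Type*} (F : RootedForest V) (a b : V) : Prop :=
  Relation.ReflTransGen (fun x y => F.parent x = some y) b a

/-- The set of descendants of `x` (including `x` itself). -/
def RootedForest.desc {V : Type*} (F : RootedForest V) (x : V) : Set V :=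
  {v | F.anc x v}

/-- `F` is an elimination forest of `H`: any two adjacent vertices are in
ancestor–descendant relation. -/
def IsEliminationForest {V : Type*} (H : HGraph V) (F : RootedForest V) : Prop :=
  ∀ u v, H.adj u v → F.anc u v ∨ F.anc v u

/-- `F` is reduced: every non-leaf vertex `u` is adjacent in `H` to the subtree
rooted at each of its children. -/
def IsReducedForest {V : Type*} (H : HGraph V) (F : RootedForest V) : Prop :=
  ∀ u v, F.parent v = some u → ∃ w ∈ F.desc v, H.adj u w

/-- The subhypergraph of `H` induced by `S` is connected. -/
def HConnectedOn {V : Type*} (H : HGraph V) (S : Set V) : Prop :=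
  ∀ a ∈ S, ∀ b ∈ S,
    Relation.ReflTransGen (fun x y => x ∈ S ∧ y ∈ S ∧ H.adj x y) a b

/-- A set of nodes all having the same parent (or all being roots). -/
def RootedForest.siblings {V : Type*} (F : RootedForest V) (R : Set V) : Prop :=
  ∀ r ∈ R, ∀ r' ∈ R, F.parent r = F.parent r'

/-- A tree factor: the full set of descendants of some node. -/
def IsTreeFactor {V : Type*} (F : RootedForest V) (S : Set V) : Prop :=
  ∃ x, S = F.desc x

/-- A forest factor: a nonempty union of tree factors whose roots are siblings. -/
def IsForestFactor {V : Type*} (F : RootedForest V) (S : Set V) : Prop :=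
  ∃ R : Set V, R.Nonempty ∧ F.siblings R ∧ S = ⋃ r ∈ R, F.desc r

/-- A context factor: a tree factor minus a forest factor whose roots are strict
descendants of the tree factor's root; a tree factor is not a context factor. -/
def IsContextFactor {V : Type*} (F : RootedForest V) (S : Set V) : Prop :=
  (∃ x, ∃ R : Set V, R.Nonempty ∧ F.siblings R ∧
    (∀ r ∈ R, F.anc x r ∧ r ≠ x) ∧ S = F.desc x \ ⋃ r ∈ R, F.desc r) ∧
  ¬ IsTreeFactor F S

/-- A factor is a tree factor, a forest factor, or a context factor. -/
def IsFactor {V : Type*} (F : RootedForest V) (S : Set V) : Prop :=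
  IsTreeFactor F S ∨ IsForestFactor F S ∨ IsContextFactor F S

/-- A maximal `X`-factor: a factor contained in `X` not strictly contained in any
other factor contained in `X`. -/
def IsMaxXFactor {V : Type*} (F : RootedForest V) (X S : Set V) : Prop :=
  IsFactor F S ∧ S ⊆ X ∧ ∀ S', IsFactor F S' → S' ⊆ X → S ⊆ S' → S' = S


namespace RootedForest

variable {V : Type*} (F : RootedForest V)

private lemma wf_irrefl {α} {r : α → α → Prop} (h : WellFounded r) (a : α) : ¬ r a a := fun hr =>
  h.induction (C := fun x => r x x → False) a (fun x ih hx => ih x hx hx) hr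

lemma anc_refl (a : V) : F.anc a a := Relation.ReflTransGen.refl

lemma anc_trans {a b c : V} (h1 : F.anc a b) (h2 : F.anc b c) : F.anc a c :=
  Relation.ReflTransGen.trans h2 h1

lemma anc_of_parent {p c : V} (h : F.parent c = some p) : F.anc p c :=
  Relation.ReflTransGen.single h

lemma parent_ne_self (a : V) : F.parent a ≠ some a := fun h =>
  wf_irrefl F.wf a h

lemma no_anc_loop {a b : V} (h1 : F.anc a b) (h2 : F.anc b a) : a = b := by
  by_contra hne
  rcases Relation.reflTransGen_iff_eq_or_transGen.mp h1 with h | t1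
  · exact hne h
  rcases Relation.reflTransGen_iff_eq_or_transGen.mp h2 with h | t2
  · exact hne h.symm
  have tloop : Relation.TransGen (fun x y => F.parent x = some y) a a := t2.trans t1
  have : Relation.TransGen (fun a b => F.parent b = some a) a a :=
    Relation.transGen_swap.mp tloop
  exact wf_irrefl F.wf.transGen a this

lemma anc_comparable {a b v : V} (h1 : F.anc a v) (h2 : F.anc b v) :
    F.anc a b ∨ F.anc b a := by
  revert h1 h2
  refine F.wf.induction
    (C := fun v => F.anc a v → F.anc b v → F.anc a b ∨ F.anc b a) v ?_
  intro v IH h1 h2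
  rcases Relation.ReflTransGen.cases_head h1 with h | ⟨c, hc, h1'⟩
  · exact Or.inr (h ▸ h2)
  rcases Relation.ReflTransGen.cases_head h2 with h | ⟨c', hc', h2'⟩
  · exact Or.inl (h ▸ h1)
  have hcc : c = c' := Option.some.inj (hc.symm.trans hc')
  exact IH c hc h1' (hcc ▸ h2')

lemma desc_subset {a b : V} (h : F.anc a b) : F.desc b ⊆ F.desc a :=
  fun _ hv => F.anc_trans h hv

lemma mem_desc_self (a : V) : a ∈ F.desc a := F.anc_refl a

lemma sib_anc_eq {r r' : V} (hp : F.parent r = F.parent r') (h : F.anc r r') : r = r' := by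
  rcases Relation.ReflTransGen.cases_head h with h' | ⟨c, hc, h2⟩
  · exact h'.symm
  · have hrc : F.anc c r := F.anc_of_parent (hp.trans hc)
    have hrceq : r = c := F.no_anc_loop h2 hrc
    exact absurd (hrceq ▸ hp.trans hc) (F.parent_ne_self r)

lemma anc_strict_parent {a b : V} (h : F.anc a b) (hne : a ≠ b) :
    ∃ p, F.parent b = some p ∧ F.anc a p := by
  rcases Relation.ReflTransGen.cases_head h with h' | ⟨p, hp, h2⟩
  · exact absurd h'.symm hne
  · exact ⟨p, hp, h2⟩

lemma anc_strict_child {a b : V} (h : F.anc a b) (hne : a ≠ b) :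
    ∃ c, F.parent c = some a ∧ F.anc c b := by
  rcases Relation.ReflTransGen.cases_tail h with h' | ⟨c, hc, h2⟩
  · exact absurd h' hne
  · exact ⟨c, h2, hc⟩

/-- Union of subtrees rooted at the elements of `R`. -/
def ffac (F : RootedForest V) (R : Set V) : Set V := ⋃ r ∈ R, F.desc r

lemma mem_ffac {R : Set V} {v : V} : v ∈ F.ffac R ↔ ∃ r ∈ R, F.anc r v := by
  simp only [ffac, Set.mem_iUnion, exists_prop]
  rfl

lemma ffac_subset_desc {R : Set V} (hsib : F.siblings R) {r a : V} (hr : r ∈ R)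
    (h : F.anc a r) (hne : a ≠ r) : F.ffac R ⊆ F.desc a := by
  obtain ⟨p, hp, hap⟩ := F.anc_strict_parent h hne
  intro w hw
  obtain ⟨s, hs, hsw⟩ := F.mem_ffac.mp hw
  have hsp : F.parent s = some p := (hsib s hs r hr).trans hp
  exact F.anc_trans (F.anc_trans hap (F.anc_of_parent hsp)) hsw

lemma sib_all_strict {R : Set V} (hsib : F.siblings R) {r x : V} (hr : r ∈ R)
    (h : F.anc x r) (hne : x ≠ r) : ∀ s ∈ R, F.anc x s ∧ s ≠ x := by
  obtain ⟨p, hp, hxp⟩ := F.anc_strict_parent h hne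
  intro s hs
  have hsp : F.parent s = some p := (hsib s hs r hr).trans hp
  have hxs : F.anc x s := F.anc_trans hxp (F.anc_of_parent hsp)
  refine ⟨hxs, fun hsx => ?_⟩
  subst hsx
  -- parent s = some p and anc s p : loop
  have hps : F.anc p s := F.anc_of_parent hsp
  have : s = p := F.no_anc_loop hxp hps
  exact F.parent_ne_self s (this ▸ hsp)

lemma ffac_inter {Q1 Q2 : Set V} (h1 : F.siblings Q1) (h2 : F.siblings Q2) :
    ∃ Q, (Q ⊆ Q1 ∨ Q ⊆ Q2) ∧ F.ffac Q1 ∩ F.ffac Q2 = F.ffac Q := by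
  by_cases hd : ∃ q1 ∈ Q1, ∃ q2 ∈ Q2, F.anc q2 q1 ∧ q2 ≠ q1
  · refine ⟨{q | q ∈ Q1 ∧ q ∈ F.ffac Q2}, Or.inl (fun q hq => hq.1), ?_⟩
    ext w
    simp only [Set.mem_inter_iff, mem_ffac, Set.mem_setOf_eq]
    constructor
    · rintro ⟨⟨a, ha, haw⟩, ⟨b, hb, hbw⟩⟩
      refine ⟨a, ⟨ha, ?_⟩, haw⟩
      rcases F.anc_comparable hbw haw with hba | hab
      · exact ⟨b, hb, hba⟩
      · by_cases heq : a = b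
        · exact ⟨b, hb, heq ▸ F.anc_refl a⟩
        · exfalso
          obtain ⟨q1, hq1, q2, hq2, hq21, hne'⟩ := hd
          have hall := F.sib_all_strict h2 hb hab heq
          have haq2 : F.anc a q2 := (hall q2 hq2).1
          have haq1 : F.anc a q1 := F.anc_trans haq2 hq21
          have : a = q1 := F.sib_anc_eq (h1 a ha q1 hq1) haq1
          subst this
          have : a = q2 := F.no_anc_loop haq2 (F.anc_trans hq21 (F.anc_refl a))
          exact (hall q2 hq2).2 this.symm
    · rintro ⟨q, ⟨hq1, hq2f⟩, hqw⟩
      obtain ⟨b, hb, hbq⟩ := hq2f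
      exact ⟨⟨q, hq1, hqw⟩, ⟨b, hb, F.anc_trans hbq hqw⟩⟩
  · push_neg at hd
    refine ⟨{q | q ∈ Q2 ∧ q ∈ F.ffac Q1}, Or.inr (fun q hq => hq.1), ?_⟩
    ext w
    simp only [Set.mem_inter_iff, mem_ffac, Set.mem_setOf_eq]
    constructor
    · rintro ⟨⟨a, ha, haw⟩, ⟨b, hb, hbw⟩⟩
      refine ⟨b, ⟨hb, ?_⟩, hbw⟩
      rcases F.anc_comparable haw hbw with hab | hba
      · exact ⟨a, ha, hab⟩
      · have : b = a := hd a ha b hb hba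
        exact ⟨a, ha, this ▸ F.anc_refl b⟩
    · rintro ⟨q, ⟨hq2, hq1f⟩, hqw⟩
      obtain ⟨a, ha, haq⟩ := hq1f
      exact ⟨⟨a, ha, F.anc_trans haq hqw⟩, ⟨q, hq2, hqw⟩⟩

lemma isFactor_context_rep {x : V} {Q : Set V} (hsib : F.siblings Q)
    (hstr : ∀ q ∈ Q, F.anc x q ∧ q ≠ x) :
    IsFactor F (F.desc x \ F.ffac Q) := by
  rcases Q.eq_empty_or_nonempty with rfl | hne
  · have he : F.ffac (∅ : Set V) = ∅ := by simp [ffac]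
    rw [he, Set.diff_empty]
    exact Or.inl ⟨x, rfl⟩
  · by_cases ht : IsTreeFactor F (F.desc x \ F.ffac Q)
    · exact Or.inl ht
    · exact Or.inr (Or.inr ⟨⟨x, Q, hne, hsib, hstr, rfl⟩, ht⟩)

lemma isFactor_forest_rep {R : Set V} (hne : R.Nonempty) (hsib : F.siblings R) :
    IsFactor F (F.ffac R) := Or.inr (Or.inl ⟨R, hne, hsib, rfl⟩)

lemma isFactor_cases {S : Set V} (h : IsFactor F S) :
    (∃ R, R.Nonempty ∧ F.siblings R ∧ S = F.ffac R) ∨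
    (∃ x Q, F.siblings Q ∧ (∀ q ∈ Q, F.anc x q ∧ q ≠ x) ∧ S = F.desc x \ F.ffac Q) := by
  rcases h with ⟨x, rfl⟩ | ⟨R, hne, hsib, rfl⟩ | ⟨⟨x, Q, hne, hsib, hstr, rfl⟩, -⟩
  · left
    refine ⟨{x}, ⟨x, rfl⟩, ?_, by simp [ffac]⟩
    intro r hr r' hr'
    simp only [Set.mem_singleton_iff] at hr hr'
    rw [hr, hr']
  · left; exact ⟨R, hne, hsib, rfl⟩
  · right; exact ⟨x, Q, hsib, hstr, rfl⟩

lemma ff_union {R1 R2 : Set V} (h1ne : R1.Nonempty) (h1sib : F.siblings R1)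
    (h2ne : R2.Nonempty) (h2sib : F.siblings R2)
    (hmeet : (F.ffac R1 ∩ F.ffac R2).Nonempty) :
    IsFactor F (F.ffac R1 ∪ F.ffac R2) := by
  obtain ⟨v, hv1, hv2⟩ := hmeet
  obtain ⟨r1, hr1, hr1v⟩ := F.mem_ffac.mp hv1
  obtain ⟨r2, hr2, hr2v⟩ := F.mem_ffac.mp hv2
  by_cases heq : r1 = r2
  · subst heq
    have hsib : F.siblings (R1 ∪ R2) := by
      intro s hs s' hs'
      have key : ∀ t ∈ R1 ∪ R2, F.parent t = F.parent r1 := by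
        rintro t (ht | ht)
        · exact h1sib t ht r1 hr1
        · exact h2sib t ht r1 hr2
      rw [key s hs, key s' hs']
    have hu : F.ffac R1 ∪ F.ffac R2 = F.ffac (R1 ∪ R2) :=
      (Set.biUnion_union R1 R2 F.desc).symm
    rw [hu]
    exact F.isFactor_forest_rep ⟨r1, Or.inl hr1⟩ hsib
  · rcases F.anc_comparable hr1v hr2v with h12 | h21
    · have hsub : F.ffac R2 ⊆ F.ffac R1 := fun w hw =>
        F.mem_ffac.mpr ⟨r1, hr1, F.ffac_subset_desc h2sib hr2 h12 heq hw⟩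
      rw [Set.union_eq_self_of_subset_right hsub]
      exact F.isFactor_forest_rep h1ne h1sib
    · have hsub : F.ffac R1 ⊆ F.ffac R2 := fun w hw =>
        F.mem_ffac.mpr ⟨r2, hr2, F.ffac_subset_desc h1sib hr1 h21 (Ne.symm heq) hw⟩
      rw [Set.union_eq_self_of_subset_left hsub]
      exact F.isFactor_forest_rep h2ne h2sib

lemma fc_union {R Q : Set V} {x : V} (hRne : R.Nonempty) (hRsib : F.siblings R)
    (hQsib : F.siblings Q) (hQ : ∀ q ∈ Q, F.anc x q ∧ q ≠ x)
    (hmeet : (F.ffac R ∩ (F.desc x \ F.ffac Q)).Nonempty) :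
    IsFactor F (F.ffac R ∪ (F.desc x \ F.ffac Q)) := by
  obtain ⟨v, hvF, hvx, hvQ⟩ := hmeet
  obtain ⟨r, hr, hrv⟩ := F.mem_ffac.mp hvF
  by_cases hrx : F.anc r x
  · have hsub : F.desc x \ F.ffac Q ⊆ F.ffac R := fun w hw =>
      F.mem_ffac.mpr ⟨r, hr, F.anc_trans hrx hw.1⟩
    rw [Set.union_eq_self_of_subset_right hsub]
    exact F.isFactor_forest_rep hRne hRsib
  · have hxr : F.anc x r := (F.anc_comparable hrv hvx).resolve_left hrx
    have hne : x ≠ r := by rintro rfl; exact hrx (F.anc_refl x)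
    have hall := F.sib_all_strict hRsib hr hxr hne
    have hRsub : F.ffac R ⊆ F.desc x := fun w hw => by
      obtain ⟨s, hs, hsw⟩ := F.mem_ffac.mp hw
      exact F.anc_trans (hall s hs).1 hsw
    have hQ' : F.ffac Q \ F.ffac R = F.ffac {q | q ∈ Q ∧ q ∉ F.ffac R} := by
      ext w
      constructor
      · rintro ⟨hwQ, hwR⟩
        obtain ⟨q, hq, hqw⟩ := F.mem_ffac.mp hwQ
        refine F.mem_ffac.mpr ⟨q, ⟨hq, fun hqR => ?_⟩, hqw⟩
        obtain ⟨s, hs, hsq⟩ := F.mem_ffac.mp hqR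
        exact hwR (F.mem_ffac.mpr ⟨s, hs, F.anc_trans hsq hqw⟩)
      · intro hw
        obtain ⟨q, ⟨hq, hqR⟩, hqw⟩ := F.mem_ffac.mp hw
        refine ⟨F.mem_ffac.mpr ⟨q, hq, hqw⟩, fun hwR => ?_⟩
        obtain ⟨s, hs, hsw⟩ := F.mem_ffac.mp hwR
        rcases F.anc_comparable hsw hqw with hsq | hqs
        · exact hqR (F.mem_ffac.mpr ⟨s, hs, hsq⟩)
        · by_cases heq : q = s
          · exact hqR (F.mem_ffac.mpr ⟨s, hs, heq ▸ F.anc_refl q⟩)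
          · have hsub := F.ffac_subset_desc hRsib hs hqs heq
            exact hvQ (F.mem_ffac.mpr ⟨q, hq, hsub hvF⟩)
    have hid : F.ffac R ∪ (F.desc x \ F.ffac Q)
        = F.desc x \ F.ffac {q | q ∈ Q ∧ q ∉ F.ffac R} := by
      rw [← hQ']
      ext w
      simp only [Set.mem_union, Set.mem_diff]
      constructor
      · rintro (h | ⟨h1, h2⟩)
        · exact ⟨hRsub h, fun hh => hh.2 h⟩
        · exact ⟨h1, fun hh => h2 hh.1⟩
      · rintro ⟨h1, h2⟩
        by_cases hR : w ∈ F.ffac R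
        · exact Or.inl hR
        · exact Or.inr ⟨h1, fun hQw => h2 ⟨hQw, hR⟩⟩
    rw [hid]
    exact F.isFactor_context_rep
      (fun q hq q' hq' => hQsib q hq.1 q' hq'.1)
      (fun q hq => hQ q hq.1)

lemma cc_union {x1 x2 : V} {Q1 Q2 : Set V} (h1sib : F.siblings Q1) (h2sib : F.siblings Q2)
    (h1str : ∀ q ∈ Q1, F.anc x1 q ∧ q ≠ x1) (h2str : ∀ q ∈ Q2, F.anc x2 q ∧ q ≠ x2)
    (hx : F.anc x1 x2)
    (hmeet : ((F.desc x1 \ F.ffac Q1) ∩ (F.desc x2 \ F.ffac Q2)).Nonempty) :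
    IsFactor F ((F.desc x1 \ F.ffac Q1) ∪ (F.desc x2 \ F.ffac Q2)) := by
  obtain ⟨v, ⟨hvx1, hvQ1⟩, ⟨hvx2, hvQ2⟩⟩ := hmeet
  have hx2Q1 : x2 ∉ F.ffac Q1 := fun h => by
    obtain ⟨q, hq, hqx2⟩ := F.mem_ffac.mp h
    exact hvQ1 (F.mem_ffac.mpr ⟨q, hq, F.anc_trans hqx2 hvx2⟩)
  by_cases hin : ∃ q ∈ Q1, F.anc x2 q
  · obtain ⟨q0, hq0, hxq0⟩ := hin
    have hne0 : x2 ≠ q0 := fun h => hx2Q1 (F.mem_ffac.mpr ⟨q0, hq0, h ▸ F.anc_refl x2⟩)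
    have hall := F.sib_all_strict h1sib hq0 hxq0 hne0
    have hQ1sub : F.ffac Q1 ⊆ F.desc x2 := fun w hw => by
      obtain ⟨q, hq, hqw⟩ := F.mem_ffac.mp hw
      exact F.anc_trans (hall q hq).1 hqw
    have hx12 : F.desc x2 ⊆ F.desc x1 := F.desc_subset hx
    have hid : (F.desc x1 \ F.ffac Q1) ∪ (F.desc x2 \ F.ffac Q2)
        = F.desc x1 \ (F.ffac Q1 ∩ F.ffac Q2) := by
      ext w
      simp only [Set.mem_union, Set.mem_diff, Set.mem_inter_iff]
      constructor
      · rintro (⟨h1, h2⟩ | ⟨h1, h2⟩)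
        · exact ⟨h1, fun hh => h2 hh.1⟩
        · exact ⟨hx12 h1, fun hh => h2 hh.2⟩
      · rintro ⟨h1, h2⟩
        by_cases hw1 : w ∈ F.ffac Q1
        · exact Or.inr ⟨hQ1sub hw1, fun hw2 => h2 ⟨hw1, hw2⟩⟩
        · exact Or.inl ⟨h1, hw1⟩
    obtain ⟨Q, hQsub, hQeq⟩ := F.ffac_inter h1sib h2sib
    rw [hid, hQeq]
    rcases hQsub with h | h
    · exact F.isFactor_context_rep
        (fun q hq q' hq' => h1sib q (h hq) q' (h hq'))
        (fun q hq => h1str q (h hq))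
    · refine F.isFactor_context_rep
        (fun q hq q' hq' => h2sib q (h hq) q' (h hq')) (fun q hq => ?_)
      obtain ⟨hxq, hqx⟩ := h2str q (h hq)
      refine ⟨F.anc_trans hx hxq, fun heq => ?_⟩
      subst heq
      have : q = x2 := F.no_anc_loop hx hxq
      exact hqx this
  · push_neg at hin
    have hsub : F.desc x2 \ F.ffac Q2 ⊆ F.desc x1 \ F.ffac Q1 := by
      rintro w ⟨hw2, hwQ2⟩
      refine ⟨F.desc_subset hx hw2, fun hwQ1 => ?_⟩
      obtain ⟨q, hq, hqw⟩ := F.mem_ffac.mp hwQ1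
      rcases F.anc_comparable hqw hw2 with hq2 | h2q
      · exact hx2Q1 (F.mem_ffac.mpr ⟨q, hq, hq2⟩)
      · exact hin q hq h2q
    rw [Set.union_eq_self_of_subset_right hsub]
    exact F.isFactor_context_rep h1sib h1str

lemma isFactor_union {S1 S2 : Set V} (h1 : IsFactor F S1) (h2 : IsFactor F S2)
    (hne : (S1 ∩ S2).Nonempty) : IsFactor F (S1 ∪ S2) := by
  rcases F.isFactor_cases h1 with ⟨R1, hR1ne, hR1s, rfl⟩ | ⟨x1, Q1, hQ1s, hQ1str, rfl⟩ <;>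
    rcases F.isFactor_cases h2 with ⟨R2, hR2ne, hR2s, rfl⟩ | ⟨x2, Q2, hQ2s, hQ2str, rfl⟩
  · exact F.ff_union hR1ne hR1s hR2ne hR2s hne
  · exact F.fc_union hR1ne hR1s hQ2s hQ2str hne
  · rw [Set.union_comm]
    rw [Set.inter_comm] at hne
    exact F.fc_union hR2ne hR2s hQ1s hQ1str hne
  · have hmeet := hne
    obtain ⟨v, ⟨hvx1, _⟩, ⟨hvx2, _⟩⟩ := hmeet
    have hcomp := F.anc_comparable hvx1 hvx2
    rcases hcomp with h12 | h21
    · exact F.cc_union hQ1s hQ2s hQ1str hQ2str h12 hne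
    · rw [Set.union_comm]
      rw [Set.inter_comm] at hne
      exact F.cc_union hQ2s hQ1s hQ2str hQ1str h21 hne

lemma singleton_isFactor (v : V) : IsFactor F {v} := by
  have hsk : ({v} : Set V) = F.desc v \ F.ffac {c | F.parent c = some v} := by
    ext w
    simp only [Set.mem_singleton_iff, Set.mem_diff]
    constructor
    · rintro rfl
      refine ⟨F.mem_desc_self w, fun h => ?_⟩
      obtain ⟨c, hc, hcv⟩ := F.mem_ffac.mp h
      have hvc : F.anc w c := F.anc_of_parent hc
      have : w = c := F.no_anc_loop hvc hcv
      exact F.parent_ne_self w (this ▸ hc)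
    · rintro ⟨hw, hwf⟩
      by_contra hne
      obtain ⟨c, hc, hcw⟩ := F.anc_strict_child hw (fun h => hne h.symm)
      exact hwf (F.mem_ffac.mpr ⟨c, hc, hcw⟩)
  rw [hsk]
  exact F.isFactor_context_rep
    (fun c hc c' hc' => hc.trans hc'.symm)
    (fun c hc => ⟨F.anc_of_parent hc, fun h => F.parent_ne_self v (h ▸ hc)⟩)

end RootedForest

/-- The maximal `X`-factors form a partition of `X`: they cover `X` and are pairwise
disjoint. -/
theorem stmt_18 {V : Type*} [Fintype V] (F : RootedForest V) (X : Set V) :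
    ⋃₀ {S | IsMaxXFactor F X S} = X ∧
    ∀ S S', IsMaxXFactor F X S → IsMaxXFactor F X S' → S ≠ S' → Disjoint S S' := by
  constructor
  · apply Set.Subset.antisymm
    · rintro v ⟨S, hS, hvS⟩
      exact hS.2.1 hvS
    · intro v hv
      have hfin : {S : Set V | IsFactor F S ∧ S ⊆ X ∧ v ∈ S}.Finite := Set.toFinite _
      have hnonempty : {S : Set V | IsFactor F S ∧ S ⊆ X ∧ v ∈ S}.Nonempty :=
        ⟨{v}, F.singleton_isFactor v, Set.singleton_subset_iff.mpr hv, rfl⟩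
      obtain ⟨S, ⟨hSf, hSX, hvS⟩, hmax⟩ :=
        Set.Finite.exists_maximalFor id _ hfin hnonempty
      refine ⟨S, ⟨hSf, hSX, fun S' hS'f hS'X hSS' => ?_⟩, hvS⟩
      exact Set.Subset.antisymm (hmax ⟨hS'f, hS'X, hSS' hvS⟩ hSS') hSS'
  · intro S S' hS hS' hne
    by_contra hdis
    rw [Set.not_disjoint_iff_nonempty_inter] at hdis
    have hu := F.isFactor_union hS.1 hS'.1 hdis
    have h1 := hS.2.2 (S ∪ S') hu (Set.union_subset hS.2.1 hS'.2.1) Set.subset_union_left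
    have h2 := hS'.2.2 (S ∪ S') hu (Set.union_subset hS.2.1 hS'.2.1) Set.subset_union_right
    exact hne (h1.symm.trans h2)
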